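/- Let γ1, γ2 ∈ S² be linearly independent. Then the cycle-consistency region Ω(γ1,γ2) is exactly the set of unit vectors of the form −(λ1γ1 + λ2γ2)/‖λ1γ1 + λ2γ2‖ with λ1, λ2 > 0; equivalently, Ω(γ1,γ2) is the minimizing geodesic arc on S² joining −γ1 and −γ2 with the two endpoints removed. -/

import Mathlib

noncomputable section

open scoped RealInnerProductSpace

/-- ℝ³ as a Euclidean space. -/
abbrev V3 : Type := EuclideanSpace ℝ (Fin 3)

/-- The unit sphere S² in ℝ³. -/
def unitSphere : Set V3 := {v : V3 | ‖v‖ = 1}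

/-- γ₁, γ₂, γ₃ are cycle-consistent if λ₁γ₁ + λ₂γ₂ + λ₃γ₃ = 0 for some λ₁, λ₂, λ₃ > 0. -/
def CycleConsistent (γ₁ γ₂ γ₃ : V3) : Prop :=
  ∃ l₁ l₂ l₃ : ℝ, 0 < l₁ ∧ 0 < l₂ ∧ 0 < l₃ ∧ l₁ • γ₁ + l₂ • γ₂ + l₃ • γ₃ = 0

/-- The cycle-consistency region Ω(γ₁,γ₂) = {γ ∈ S² : γ₁, γ₂, γ are cycle-consistent}. -/
def consistencyRegion (γ₁ γ₂ : V3) : Set V3 :=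
  {γ ∈ unitSphere | CycleConsistent γ₁ γ₂ γ}

/-- Great-circle distance d_g(u,v) = arccos⟨u,v⟩ for unit vectors. -/
def dg (u v : V3) : ℝ := Real.arccos ⟪u, v⟫

/-- The AAB inconsistency I_AAB(γ₃; γ₁, γ₂) = inf_{γ ∈ Ω(γ₁,γ₂)} d_g(γ₃, γ). -/
def IAAB (γ₃ γ₁ γ₂ : V3) : ℝ := sInf ((dg γ₃) '' consistencyRegion γ₁ γ₂)

/-- For linearly independent γ₁, γ₂ ∈ S², the cycle-consistency region
Ω(γ₁,γ₂) is exactly the set of unit vectors −(λ₁γ₁+λ₂γ₂)/‖λ₁γ₁+λ₂γ₂‖ with λ₁, λ₂ > 0;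
equivalently, it is the minimizing geodesic arc on S² joining −γ₁ and −γ₂ with the two
endpoints removed. -/
lemma inner_comb (u w : V3) (a b a' b' : ℝ) :
    ⟪a • u + b • w, a' • u + b' • w⟫ =
      a * a' * ⟪u, u⟫ + a * b' * ⟪u, w⟫ + b * a' * ⟪w, u⟫ + b * b' * ⟪w, w⟫ := by
  simp only [inner_add_left, inner_add_right, real_inner_smul_left, real_inner_smul_right]
  ring

lemma inner_sub_comb (γ u w : V3) (a b : ℝ) :
    ⟪γ - a • u - b • w, γ - a • u - b • w⟫ =
      ⟪γ, γ⟫ - 2 * a * ⟪u, γ⟫ - 2 * b * ⟪w, γ⟫ + a * a * ⟪u, u⟫ + a * b * ⟪u, w⟫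
        + a * b * ⟪w, u⟫ + b * b * ⟪w, w⟫ := by
  simp only [inner_sub_left, inner_sub_right, real_inner_smul_left, real_inner_smul_right]
  rw [real_inner_comm γ u, real_inner_comm γ w, real_inner_comm w u]
  ring

-- key geodesic lemma
set_option maxHeartbeats 2000000 in
lemma key (u v : V3) (hu : ‖u‖ = 1) (hv : ‖v‖ = 1)
    (hli : ∀ a b : ℝ, a • u + b • v = 0 → a = 0 ∧ b = 0) (γ : V3) :
    (∃ l₁ l₂ : ℝ, 0 < l₁ ∧ 0 < l₂ ∧ γ = ‖l₁ • u + l₂ • v‖⁻¹ • (l₁ • u + l₂ • v)) ↔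
    (‖γ‖ = 1 ∧ Real.arccos ⟪u, γ⟫ + Real.arccos ⟪γ, v⟫ = Real.arccos ⟪u, v⟫ ∧ γ ≠ u ∧ γ ≠ v) := by
  have huu : ⟪u, u⟫ = 1 := by rw [real_inner_self_eq_norm_sq, hu]; norm_num
  have hvv : ⟪v, v⟫ = 1 := by rw [real_inner_self_eq_norm_sq, hv]; norm_num
  set c : ℝ := ⟪u, v⟫ with hc
  have hcvu : ⟪v, u⟫ = c := by rw [hc]; exact (real_inner_comm v u).symm
  have huv_ne : u ≠ v := by
    intro h
    have := hli 1 (-1) (by rw [h]; module)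
    norm_num at this
  have hc1 : c < 1 := by
    have := inner_lt_norm_mul_iff_real (x := u) (y := v)
    rw [hu, hv] at this
    simpa using this.2 (by simpa using huv_ne)
  have hc2 : -1 < c := by
    have h2 : u ≠ -v := by
      intro h
      have := hli 1 1 (by rw [h]; module)
      norm_num at this
    have h4 := inner_lt_norm_mul_iff_real (x := u) (y := -v)
    rw [hu, norm_neg, hv] at h4
    have h3 : ⟪u, -v⟫ < 1 := by
      simpa using h4.2 (by simpa using h2)
    have h5 : ⟪u, -v⟫ = -c := by rw [inner_neg_right, hc]
    rw [h5] at h3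
    linarith only [h3]
  have hc2' : (1 : ℝ) - c ^ 2 > 0 := by nlinarith only [hc1, hc2]
  set s : ℝ := Real.sqrt (1 - c ^ 2) with hs
  have hspos : 0 < s := Real.sqrt_pos.mpr hc2'
  have hs2 : s ^ 2 = 1 - c ^ 2 := Real.sq_sqrt hc2'.le
  set θ : ℝ := Real.arccos c with hθ
  have hcosθ : Real.cos θ = c := Real.cos_arccos (by linarith only [hc2]) (by linarith only [hc1])
  have hsinθ : Real.sin θ = s := Real.sin_arccos c
  have hθpos : 0 < θ := Real.arccos_pos.mpr hc1
  have hθpi : θ ≤ Real.pi := Real.arccos_le_pi c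
  set w : V3 := s⁻¹ • (v - c • u) with hw
  have hsw : s • w = v - c • u := by
    rw [hw, smul_smul, mul_inv_cancel₀ hspos.ne', one_smul]
  have hv' : v = c • u + s • w := by rw [hsw]; abel
  have huw : ⟪u, w⟫ = 0 := by
    rw [hw]
    simp [inner_smul_right, inner_sub_right, inner_smul_right, huu, hc, hu]
  have hwu : ⟪w, u⟫ = 0 := by rw [real_inner_comm]; exact huw
  have hwv : ⟪w, v⟫ = s := by
    rw [hw, real_inner_smul_left, inner_sub_left, real_inner_smul_left, hvv, ← hc]
    have e7 : (1 : ℝ) - c * c = s * s := by linear_combination -hs2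
    rw [e7, ← mul_assoc, inv_mul_cancel₀ hspos.ne', one_mul]
  have hvw : ⟪v, w⟫ = s := by rw [real_inner_comm]; exact hwv
  have hww : ⟪w, w⟫ = 1 := by
    have h6 : ⟪w, w⟫ = s⁻¹ * (⟪v, w⟫ - c * ⟪u, w⟫) := by
      nth_rewrite 1 [hw]
      rw [real_inner_smul_left, inner_sub_left, real_inner_smul_left]
    rw [h6, hvw, huw, mul_zero, sub_zero, inv_mul_cancel₀ hspos.ne']
  clear_value c s θ w
  constructor
  · rintro ⟨l₁, l₂, hl₁, hl₂, rfl⟩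
    set p : V3 := l₁ • u + l₂ • v with hp
    have hpne : p ≠ 0 := by
      intro h
      exact hl₁.ne' (hli l₁ l₂ h).1
    have hn : 0 < ‖p‖ := norm_pos_iff.mpr hpne
    set n : ℝ := ‖p‖ with hnn
    set γ : V3 := n⁻¹ • p with hγ
    clear_value n γ
    have hγnorm : ‖γ‖ = 1 := by
      rw [hγ, norm_smul, norm_inv, Real.norm_eq_abs, abs_of_pos hn, hnn,
        inv_mul_cancel₀ (norm_ne_zero_iff.mpr hpne)]
    set a : ℝ := ⟪u, γ⟫ with ha
    set b : ℝ := ⟪w, γ⟫ with hb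
    clear_value a b
    have haval : a = n⁻¹ * (l₁ + l₂ * c) := by
      rw [ha, hγ, hp, inner_smul_right, inner_add_right, inner_smul_right, inner_smul_right,
        huu, hc.symm]
      ring
    have hbval : b = n⁻¹ * (l₂ * s) := by
      rw [hb, hγ, hp, inner_smul_right, inner_add_right, inner_smul_right, inner_smul_right,
        hwu, hwv]
      ring
    have hbpos : 0 < b := by
      rw [hbval]; positivity
    have hγspan : γ = a • u + b • w := by
      rw [hγ, hp, hv', haval, hbval]
      module
    have hab : a ^ 2 + b ^ 2 = 1 := by
      have : ⟪γ, γ⟫ = 1 := by rw [real_inner_self_eq_norm_sq, hγnorm]; norm_num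
      rw [hγspan] at this
      rw [inner_comb, huu, huw, hwu, hww] at this
      linear_combination this
    have ha1 : |a| ≤ 1 := by nlinarith only [hab, sq_nonneg b, abs_nonneg a, sq_abs a]
    set t : ℝ := Real.arccos a with ht
    clear_value t
    have hcost : Real.cos t = a := by
      rw [ht]; exact Real.cos_arccos (abs_le.mp ha1).1 (abs_le.mp ha1).2
    have hsint : Real.sin t = b := by
      rw [ht, Real.sin_arccos]
      rw [show (1 : ℝ) - a ^ 2 = b ^ 2 by linear_combination -hab]
      exact Real.sqrt_sq hbpos.le
    have htpi : t ≤ Real.pi := by rw [ht]; exact Real.arccos_le_pi a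
    have htnn : 0 ≤ t := by rw [ht]; exact Real.arccos_nonneg a
    have hγv : ⟪γ, v⟫ = Real.cos (θ - t) := by
      rw [Real.cos_sub, hcosθ, hsinθ, hcost, hsint, hγspan, inner_add_left,
        real_inner_smul_left, real_inner_smul_left, hwv, ← hc]
      ring
    have hsin_pos : 0 < Real.sin (θ - t) := by
      rw [Real.sin_sub, hsinθ, hcosθ, hcost, hsint, haval, hbval]
      have : s * (n⁻¹ * (l₁ + l₂ * c)) - c * (n⁻¹ * (l₂ * s)) = n⁻¹ * s * l₁ := by ring
      rw [this]; positivity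
    have hθt_pos : 0 < θ - t := by
      by_contra h
      push_neg at h
      have h1 : -(Real.pi) ≤ θ - t := by linarith only [hθpos, htpi]
      have h2 : Real.sin (θ - t) ≤ 0 := by
        have h3 := Real.sin_nonneg_of_nonneg_of_le_pi (x := -(θ - t))
          (by linarith only [h]) (by linarith only [h1])
        rw [Real.sin_neg] at h3
        linarith only [h3]
      linarith only [h2, hsin_pos]
    have hθt_pi : θ - t ≤ Real.pi := by linarith only [hθpi, htnn]
    refine ⟨hγnorm, ?_, ?_, ?_⟩
    · rw [hγv, Real.arccos_cos hθt_pos.le hθt_pi]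
      ring
    · intro h
      rw [h, hwu] at hb
      exact absurd hb hbpos.ne'
    · intro h
      rw [h, hvv] at hγv
      have : θ - t = 0 := by
        have h1 := Real.cos_eq_one_iff_of_lt_of_lt (x := θ - t) (by linarith only [Real.pi_pos, hθpi, htpi, htnn, hθpos])
          (by linarith only [Real.pi_pos, hθpi, htpi, htnn, hθpos])
        exact h1.mp hγv.symm
      rw [this] at hsin_pos
      simp at hsin_pos
  · rintro ⟨hγnorm, hsum, hγu, hγv⟩
    set a : ℝ := ⟪u, γ⟫ with ha
    set b : ℝ := ⟪w, γ⟫ with hb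
    clear_value a b
    set α : ℝ := Real.arccos a with hα
    set β : ℝ := Real.arccos ⟪γ, v⟫ with hβ
    clear_value α β
    have hαβ : α + β = θ := hsum
    have hα_nn : 0 ≤ α := by rw [hα]; exact Real.arccos_nonneg a
    have hβ_nn : 0 ≤ β := by rw [hβ]; exact Real.arccos_nonneg _
    have hα_pi : α ≤ Real.pi := by rw [hα]; exact Real.arccos_le_pi a
    have ha1 : |a| ≤ 1 := by
      have h7 := abs_real_inner_le_norm u γ
      rw [hu, hγnorm, one_mul] at h7
      rw [ha]; exact h7
    have hgv1 : |⟪γ, v⟫| ≤ 1 := by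
      have := abs_real_inner_le_norm γ v
      rwa [hv, hγnorm, one_mul] at this
    have hcosα : Real.cos α = a := by
      rw [hα]; exact Real.cos_arccos (abs_le.mp ha1).1 (abs_le.mp ha1).2
    have hsinα : Real.sin α = Real.sqrt (1 - a ^ 2) := by rw [hα]; exact Real.sin_arccos a
    have hcosβ : Real.cos β = ⟪γ, v⟫ := by
      rw [hβ]; exact Real.cos_arccos (abs_le.mp hgv1).1 (abs_le.mp hgv1).2
    -- ⟪γ, v⟫ = c * a + s * b
    have hγv_inner : ⟪γ, v⟫ = c * a + s * b := by
      rw [hv', inner_add_right, real_inner_smul_right, real_inner_smul_right]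
      rw [real_inner_comm u γ, real_inner_comm w γ, ← ha, ← hb]
    -- cos β = cos (θ - α) = c * a + s * sin α
    have hβ_eq : β = θ - α := by linarith only [hαβ]
    have hcosβ2 : Real.cos β = c * a + s * Real.sin α := by
      rw [hβ_eq, Real.cos_sub, hcosθ, hsinθ, hcosα]
    have hb_eq : b = Real.sin α := by
      have h8 : c * a + s * b = c * a + s * Real.sin α := by
        rw [← hγv_inner, ← hcosβ2, hcosβ]
      have h9 : s * b = s * Real.sin α := by linarith only [h8]
      exact mul_left_cancel₀ hspos.ne' h9
    -- γ lies in span of u, w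
    have hspan : γ = a • u + b • w := by
      have hr : ⟪γ - a • u - b • w, γ - a • u - b • w⟫ = 0 := by
        have hγγ : ⟪γ, γ⟫ = 1 := by rw [real_inner_self_eq_norm_sq, hγnorm]; norm_num
        have hγu' : ⟪γ, u⟫ = a := real_inner_comm u γ ▸ ha ▸ rfl
        have hγw' : ⟪γ, w⟫ = b := real_inner_comm w γ ▸ hb ▸ rfl
        have h1a2 : Real.sin α ^ 2 = 1 - a ^ 2 := by
          rw [hsinα, Real.sq_sqrt (by obtain ⟨hL, hR⟩ := abs_le.mp ha1; nlinarith only [hL, hR] :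
            (0:ℝ) ≤ 1 - a ^ 2)]
        rw [inner_sub_comb, hγγ, ← ha, ← hb, huu, huw, hwu, hww, hb_eq]
        linear_combination -h1a2
      have := inner_self_eq_zero.mp hr
      have h0 : γ - a • u - b • w = 0 := this
      have : γ = a • u + b • w := by
        rw [← sub_eq_zero]; rw [show γ - (a • u + b • w) = γ - a • u - b • w by abel]; exact h0
      exact this
    have hα_pos : 0 < α := by
      rcases lt_or_eq_of_le hα_nn with h | h
      · exact h
      · exfalso
        have hA : a = 1 := by
          rw [← hcosα, ← h, Real.cos_zero]
        have : γ = u := by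
          have := (inner_eq_one_iff_of_norm_eq_one hu hγnorm).mp (ha ▸ hA)
          exact this.symm
        exact hγu this
    have hβ_pos : 0 < β := by
      rcases lt_or_eq_of_le hβ_nn with h | h
      · exact h
      · exfalso
        have : ⟪γ, v⟫ = 1 := by rw [← hcosβ, ← h, Real.cos_zero]
        exact hγv ((inner_eq_one_iff_of_norm_eq_one hγnorm hv).mp this)
    have hα_lt : α < θ := by linarith only [hαβ, hβ_pos]
    refine ⟨Real.sin (θ - α) / s, Real.sin α / s, ?_, ?_, ?_⟩
    · apply div_pos _ hspos
      apply Real.sin_pos_of_pos_of_lt_pi (by linarith only [hα_lt])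
        (by linarith only [hα_pos, hθpi])
    · apply div_pos _ hspos
      apply Real.sin_pos_of_pos_of_lt_pi hα_pos (by linarith only [hα_lt, hθpi])
    · have hcomb : (Real.sin (θ - α) / s) • u + (Real.sin α / s) • v = γ := by
        rw [hspan, hv']
        have e1 : Real.sin (θ - α) / s + Real.sin α / s * c = a := by
          rw [Real.sin_sub, hsinθ, hcosθ, hcosα]
          field_simp
          ring
        have e2 : Real.sin α / s * s = b := by
          rw [hb_eq]; field_simp
        rw [smul_add, smul_smul, smul_smul, ← add_assoc, ← add_smul, e1, e2]
      rw [hcomb, hγnorm]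
      norm_num

theorem stmt_1 (γ₁ γ₂ : V3) (h₁ : γ₁ ∈ unitSphere) (h₂ : γ₂ ∈ unitSphere)
    (hli : LinearIndependent ℝ ![γ₁, γ₂]) :
    consistencyRegion γ₁ γ₂ =
      {γ : V3 | ∃ l₁ l₂ : ℝ, 0 < l₁ ∧ 0 < l₂ ∧
        γ = -(‖l₁ • γ₁ + l₂ • γ₂‖⁻¹ • (l₁ • γ₁ + l₂ • γ₂))} ∧
    consistencyRegion γ₁ γ₂ =
      {γ ∈ unitSphere | dg (-γ₁) γ + dg γ (-γ₂) = dg (-γ₁) (-γ₂)} \ {-γ₁, -γ₂} := by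
  have h1 : ‖γ₁‖ = 1 := h₁
  have h2 : ‖γ₂‖ = 1 := h₂
  have hli' : ∀ a b : ℝ, a • γ₁ + b • γ₂ = 0 → a = 0 ∧ b = 0 := fun a b h =>
    LinearIndependent.pair_iff.mp hli a b h
  have hliuv : ∀ a b : ℝ, a • (-γ₁) + b • (-γ₂) = 0 → a = 0 ∧ b = 0 := by
    intro a b h
    have h' : (-a) • γ₁ + (-b) • γ₂ = 0 := by
      rw [← h]; module
    obtain ⟨ha0, hb0⟩ := hli' _ _ h'
    exact ⟨neg_eq_zero.mp ha0, neg_eq_zero.mp hb0⟩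
  have regionEq1 : consistencyRegion γ₁ γ₂ =
      {γ : V3 | ∃ l₁ l₂ : ℝ, 0 < l₁ ∧ 0 < l₂ ∧
        γ = -(‖l₁ • γ₁ + l₂ • γ₂‖⁻¹ • (l₁ • γ₁ + l₂ • γ₂))} := by
    ext γ
    simp only [consistencyRegion, unitSphere, CycleConsistent, Set.mem_setOf_eq,
      Set.mem_sep_iff]
    constructor
    · rintro ⟨hnorm, l₁, l₂, l₃, hl₁, hl₂, hl₃, heq⟩
      refine ⟨l₁, l₂, hl₁, hl₂, ?_⟩
      have hp : l₁ • γ₁ + l₂ • γ₂ = -(l₃ • γ) := by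
        have : l₁ • γ₁ + l₂ • γ₂ + l₃ • γ - l₃ • γ = -(l₃ • γ) := by rw [heq]; abel
        rw [← this]; abel
      have hnormp : ‖l₁ • γ₁ + l₂ • γ₂‖ = l₃ := by
        rw [hp, norm_neg, norm_smul, Real.norm_eq_abs, abs_of_pos hl₃, hnorm, mul_one]
      rw [hnormp, hp, smul_neg, neg_neg, smul_smul, inv_mul_cancel₀ hl₃.ne', one_smul]
    · rintro ⟨l₁, l₂, hl₁, hl₂, rfl⟩
      have hpne : l₁ • γ₁ + l₂ • γ₂ ≠ 0 := by
        intro h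
        exact hl₁.ne' (hli' l₁ l₂ h).1
      have hn : 0 < ‖l₁ • γ₁ + l₂ • γ₂‖ := norm_pos_iff.mpr hpne
      constructor
      · rw [norm_neg, norm_smul, norm_inv, Real.norm_eq_abs, abs_of_pos hn,
          inv_mul_cancel₀ hn.ne']
      · refine ⟨l₁, l₂, ‖l₁ • γ₁ + l₂ • γ₂‖, hl₁, hl₂, hn, ?_⟩
        rw [smul_neg, smul_smul, mul_inv_cancel₀ hn.ne', one_smul]
        abel
  refine ⟨regionEq1, ?_⟩
  rw [regionEq1]
  ext γ
  have hbridge : ∀ l₁ l₂ : ℝ,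
      -(‖l₁ • γ₁ + l₂ • γ₂‖⁻¹ • (l₁ • γ₁ + l₂ • γ₂)) =
        ‖l₁ • (-γ₁) + l₂ • (-γ₂)‖⁻¹ • (l₁ • (-γ₁) + l₂ • (-γ₂)) := by
    intro l₁ l₂
    have e : l₁ • (-γ₁) + l₂ • (-γ₂) = -(l₁ • γ₁ + l₂ • γ₂) := by module
    rw [e, norm_neg, smul_neg]
  have hk := key (-γ₁) (-γ₂) (by rw [norm_neg]; exact h1) (by rw [norm_neg]; exact h2)
    hliuv γ
  simp only [Set.mem_setOf_eq, Set.mem_diff, Set.mem_sep_iff, Set.mem_insert_iff,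
    Set.mem_singleton_iff, unitSphere, dg]
  constructor
  · rintro ⟨l₁, l₂, hl₁, hl₂, rfl⟩
    have := hk.mp ⟨l₁, l₂, hl₁, hl₂, hbridge l₁ l₂⟩
    exact ⟨⟨this.1, this.2.1⟩, by push_neg; exact ⟨this.2.2.1, this.2.2.2⟩⟩
  · rintro ⟨⟨hns, hsum⟩, hne⟩
    push_neg at hne
    obtain ⟨l₁, l₂, hl₁, hl₂, hγ⟩ := hk.mpr ⟨hns, hsum, hne.1, hne.2⟩
    exact ⟨l₁, l₂, hl₁, hl₂, by rw [hγ, hbridge]⟩
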